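/- Let M ⊆ N be commutative binoids with N cancellative. Then N is finite over M (i.e., finitely generated as an M-set) if and only if N is pure integral over M (for every n ∈ N there exists k ∈ ℕ₊ with kn ∈ M) and N is finitely generated as an M-binoid. -/

import Mathlib

/-!  Basic theory of (commutative) binoids: a commutative monoid together with
an absorbing element `infty`.  We use a bundled structure `BinoidOn X`. -/

structure BinoidOn (X : Type u) where
  add : X → X → X
  zero : X
  infty : X
  add_assoc : ∀ a b c : X, add (add a b) c = add a (add b c)
  add_comm : ∀ a b : X, add a b = add b a
  zero_add : ∀ a : X, add zero a = a
  infty_add : ∀ a : X, add infty a = infty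

namespace BinoidOn

variable {X : Type u} {Y : Type v} (B : BinoidOn X) (C : BinoidOn Y)

/-- `n`-fold multiple `n • a`. -/
def smul (B : BinoidOn X) : ℕ → X → X
  | 0, _ => B.zero
  | n + 1, a => B.add a (smul B n a)

/-- Sum of a list of elements. -/
def listSum (l : List X) : X := l.foldr B.add B.zero

/-- An ideal of a binoid: a nonempty subset `I` with `I + N ⊆ I`. -/
def IsIdeal (I : Set X) : Prop := I.Nonempty ∧ ∀ a ∈ I, ∀ x : X, B.add a x ∈ I

/-- A subbinoid: a submonoid containing `infty`. -/
def IsSubbinoid (M : Set X) : Prop :=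
  B.zero ∈ M ∧ B.infty ∈ M ∧ ∀ a ∈ M, ∀ b ∈ M, B.add a b ∈ M

/-- The set of units. -/
def unitsSet : Set X := {u | ∃ a, B.add u a = B.zero}

/-- `N₊`, the ideal of non-units. -/
def nplus : Set X := (B.unitsSet)ᶜ

/-- The ideal generated by a set. -/
def genIdeal (S : Set X) : Set X := {x | ∃ a ∈ S, ∃ n, x = B.add a n}

/-- The `n`-fold sum `nI = {a₁ + ⋯ + aₙ | aᵢ ∈ I}`. -/
def nSum (n : ℕ) (I : Set X) : Set X :=
  {x | ∃ l : List X, l.length = n ∧ (∀ a ∈ l, a ∈ I) ∧ x = B.listSum l}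

/-- The Frobenius power `[q]I`: the ideal generated by `{q • a | a ∈ I}`. -/
def frob (q : ℕ) (I : Set X) : Set X := B.genIdeal {x | ∃ a ∈ I, x = B.smul q a}

/-- The radical of an ideal. -/
def radical (I : Set X) : Set X := {a | ∃ n : ℕ, 0 < n ∧ B.smul n a ∈ I}

/-- `N₊`-primary ideal. -/
def IsPrimary (I : Set X) : Prop := B.radical I = B.nplus

/-- Finitely generated binoid. -/
def FG : Prop :=
  ∃ G : Finset X, ∀ x : X, x = B.infty ∨ ∃ l : List X, (∀ a ∈ l, a ∈ G) ∧ x = B.listSum l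

/-- Semipositive: a nonzero binoid with finitely many units. -/
def Semipositive : Prop := B.zero ≠ B.infty ∧ B.unitsSet.Finite

/-- Prime ideal. -/
def IsPrime (P : Set X) : Prop :=
  B.IsIdeal P ∧ P ≠ Set.univ ∧ ∀ a b : X, B.add a b ∈ P → a ∈ P ∨ b ∈ P

/-- The (combinatorial) dimension of the binoid is `d`: there is a strictly
increasing chain of prime ideals of length `d`, and no longer one. -/
def HasDim (d : ℕ) : Prop :=
  (∃ c : Fin (d + 1) → Set X, StrictMono c ∧ ∀ i, B.IsPrime (c i)) ∧
    ∀ (k : ℕ) (c : Fin (k + 1) → Set X), StrictMono c → (∀ i, B.IsPrime (c i)) → k ≤ d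

end BinoidOn

/-- The setoid collapsing a subset `A` to a single point (Rees congruence). -/
def collapseSetoid {X : Type u} (A : Set X) : Setoid X where
  r x y := x = y ∨ (x ∈ A ∧ y ∈ A)
  iseqv := ⟨fun _ => Or.inl rfl,
    fun h => h.elim (fun e => Or.inl e.symm) (fun h => Or.inr ⟨h.2, h.1⟩),
    fun h1 h2 => by
      rcases h1 with rfl | h1
      · exact h2
      · rcases h2 with rfl | h2
        · exact Or.inr h1
        · exact Or.inr ⟨h1.1, h2.2⟩⟩

namespace BinoidOn

variable {X : Type u} {Y : Type v} (B : BinoidOn X) (C : BinoidOn Y)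

/-- The underlying set of the Rees quotient `N/I` (we collapse the ideal
generated by `I`; for an ideal `I` this is `I` itself). -/
abbrev ReesQuot (I : Set X) : Type u := Quotient (collapseSetoid (B.genIdeal I))

lemma genIdeal_closed {I : Set X} {a : X} (ha : a ∈ B.genIdeal I) (x : X) :
    B.add a x ∈ B.genIdeal I := by
  obtain ⟨b, hb, n, rfl⟩ := ha
  exact ⟨b, hb, B.add n x, (B.add_assoc b n x)⟩

/-- The Rees quotient binoid `N/I`. -/
def quotB (I : Set X) : BinoidOn (B.ReesQuot I) where
  add := Quotient.map₂ B.add (by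
    rintro a a' (rfl | ⟨ha, ha'⟩) b b' (rfl | ⟨hb, hb'⟩)
    · exact Or.inl rfl
    · exact Or.inr ⟨by rw [B.add_comm]; exact B.genIdeal_closed hb _,
        by rw [B.add_comm]; exact B.genIdeal_closed hb' _⟩
    · exact Or.inr ⟨B.genIdeal_closed ha _, B.genIdeal_closed ha' _⟩
    · exact Or.inr ⟨B.genIdeal_closed ha _, B.genIdeal_closed ha' _⟩)
  zero := Quotient.mk _ B.zero
  infty := Quotient.mk _ B.infty
  add_assoc := by
    rintro ⟨a⟩ ⟨b⟩ ⟨c⟩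
    exact congrArg (Quotient.mk _) (B.add_assoc a b c)
  add_comm := by
    rintro ⟨a⟩ ⟨b⟩
    exact congrArg (Quotient.mk _) (B.add_comm a b)
  zero_add := by
    rintro ⟨a⟩
    exact congrArg (Quotient.mk _) (B.zero_add a)
  infty_add := by
    rintro ⟨a⟩
    exact congrArg (Quotient.mk _) (B.infty_add a)

/-- The underlying set of `N/[q]N₊`. -/
abbrev hkQuot (q : ℕ) : Type u := Quotient (collapseSetoid (B.frob q B.nplus))

/-- The Hilbert–Kunz function `HKF(N,q) = #(N/[q]N₊)`, where `#S = |S| - 1`. -/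
noncomputable def hkf (q : ℕ) : ℕ := Nat.card (B.hkQuot q) - 1

/-- Pairs with an `infty` coordinate. -/
def inftyPairs : Set (X × Y) := {p | p.1 = B.infty ∨ p.2 = C.infty}

/-- Carrier of the smash product `M ∧ N`. -/
abbrev SmashCarrier : Type _ := Quotient (collapseSetoid (B.inftyPairs C))

lemma inftyPairs_add_left {p q : X × Y} (hp : p ∈ B.inftyPairs C) :
    (B.add p.1 q.1, C.add p.2 q.2) ∈ B.inftyPairs C := by
  rcases hp with h | h
  · exact Or.inl (by rw [h, B.infty_add])
  · exact Or.inr (by rw [h, C.infty_add])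

lemma inftyPairs_add_right {p q : X × Y} (hq : q ∈ B.inftyPairs C) :
    (B.add p.1 q.1, C.add p.2 q.2) ∈ B.inftyPairs C := by
  rcases hq with h | h
  · exact Or.inl (by rw [h, B.add_comm, B.infty_add])
  · exact Or.inr (by rw [h, C.add_comm, C.infty_add])

/-- The smash product binoid `M ∧ N`. -/
def smash : BinoidOn (B.SmashCarrier C) where
  add := Quotient.map₂ (fun p q => (B.add p.1 q.1, C.add p.2 q.2)) (by
    rintro p p' (rfl | ⟨hp, hp'⟩) q q' (rfl | ⟨hq, hq'⟩)
    · exact Or.inl rfl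
    · exact Or.inr ⟨B.inftyPairs_add_right C hq, B.inftyPairs_add_right C hq'⟩
    · exact Or.inr ⟨B.inftyPairs_add_left C hp, B.inftyPairs_add_left C hp'⟩
    · exact Or.inr ⟨B.inftyPairs_add_left C hp, B.inftyPairs_add_left C hp'⟩)
  zero := Quotient.mk _ (B.zero, C.zero)
  infty := Quotient.mk _ (B.infty, C.infty)
  add_assoc := by
    rintro ⟨a⟩ ⟨b⟩ ⟨c⟩
    exact congrArg (Quotient.mk _)
      (Prod.ext (B.add_assoc _ _ _) (C.add_assoc _ _ _))
  add_comm := by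
    rintro ⟨a⟩ ⟨b⟩
    exact congrArg (Quotient.mk _)
      (Prod.ext (B.add_comm _ _) (C.add_comm _ _))
  zero_add := by
    rintro ⟨a⟩
    exact congrArg (Quotient.mk _)
      (Prod.ext (B.zero_add _) (C.zero_add _))
  infty_add := by
    rintro ⟨a⟩
    exact congrArg (Quotient.mk _)
      (Prod.ext (B.infty_add _) (C.infty_add _))

end BinoidOn

/-- An `N`-set: a pointed set with an operation of the binoid. -/
structure NSetOn {X : Type u} (B : BinoidOn X) (S : Type w) where
  pt : S
  act : X → S → S
  act_zero : ∀ s, act B.zero s = s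
  act_infty : ∀ s, act B.infty s = pt
  act_pt : ∀ n, act n pt = pt
  act_add : ∀ n m s, act (B.add n m) s = act n (act m s)

section NSet

variable {X : Type u} {S : Type w} {B : BinoidOn X}

/-- One step of the connectedness relation on `S ∖ {p}`. -/
def NStep (σ : NSetOn B S) (s t : S) : Prop :=
  s ≠ σ.pt ∧ t ≠ σ.pt ∧ ∃ n, n ≠ B.infty ∧ (σ.act n s = t ∨ σ.act n t = s)

/-- The connectedness (equivalence) relation `∼_N` on `S ∖ {p}`. -/
def NConn (σ : NSetOn B S) : S → S → Prop := Relation.ReflTransGen (NStep σ)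

/-- `N`-subsets of an `N`-set. -/
def IsNSubset (σ : NSetOn B S) (T : Set S) : Prop :=
  σ.pt ∈ T ∧ ∀ n : X, ∀ s ∈ T, σ.act n s ∈ T

/-- `T` is a pointed union of two nontrivial `N`-subsets. -/
def IsReducibleSet (σ : NSetOn B S) (T : Set S) : Prop :=
  ∃ A A' : Set S, IsNSubset σ A ∧ IsNSubset σ A' ∧
    A ≠ {σ.pt} ∧ A' ≠ {σ.pt} ∧ A ∪ A' = T ∧ A ∩ A' = {σ.pt}

/-- An irreducible `N`-subset. -/
def IsIrreducibleSet (σ : NSetOn B S) (T : Set S) : Prop :=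
  IsNSubset σ T ∧ T ≠ {σ.pt} ∧ ¬ IsReducibleSet σ T

end NSet

/-- The trivial binoid `{0, ∞}`, realized on `Bool` (`false = 0`, `true = ∞`). -/
def trivB : BinoidOn Bool where
  add := or
  zero := false
  infty := true
  add_assoc := by decide
  add_comm := by decide
  zero_add := by decide
  infty_add := by decide

/-- The binoid `M^∞` obtained from a commutative monoid by adjoining `∞ = ⊤`. -/
def withTopBinoid (M : Type u) [AddCommMonoid M] : BinoidOn (WithTop M) where
  add := (· + ·)
  zero := 0
  infty := ⊤
  add_assoc := add_assoc
  add_comm := add_comm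
  zero_add := zero_add
  infty_add := fun a => WithTop.top_add a


namespace BinoidOn

variable {X : Type} (B : BinoidOn X)

lemma aux_add_zero (a : X) : B.add a B.zero = a := by
  rw [B.add_comm]; exact B.zero_add a

lemma aux_add_infty (a : X) : B.add a B.infty = B.infty := by
  rw [B.add_comm]; exact B.infty_add a

lemma aux_smul_succ (n : ℕ) (a : X) : B.smul (n+1) a = B.add a (B.smul n a) := rfl

lemma aux_smul_zero (a : X) : B.smul 0 a = B.zero := rfl

lemma aux_smul_one (a : X) : B.smul 1 a = a := by
  rw [B.aux_smul_succ, B.aux_smul_zero, B.aux_add_zero]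

lemma aux_add4 (a b c d : X) :
    B.add (B.add a b) (B.add c d) = B.add (B.add a c) (B.add b d) := by
  rw [B.add_assoc a b (B.add c d), ← B.add_assoc b c d, B.add_comm b c,
    B.add_assoc c b d, ← B.add_assoc a c (B.add b d)]

lemma aux_smul_add (n : ℕ) (a b : X) :
    B.smul n (B.add a b) = B.add (B.smul n a) (B.smul n b) := by
  induction n with
  | zero => exact (B.zero_add B.zero).symm
  | succ n ih =>
    rw [B.aux_smul_succ, ih, B.aux_smul_succ, B.aux_smul_succ, B.aux_add4]

lemma aux_smul_add_nat (m n : ℕ) (a : X) :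
    B.smul (m + n) a = B.add (B.smul m a) (B.smul n a) := by
  induction m with
  | zero => rw [Nat.zero_add]; exact (B.zero_add _).symm
  | succ m ih =>
    have h : m + 1 + n = (m + n) + 1 := by omega
    rw [h, B.aux_smul_succ (m+n), B.aux_smul_succ m, ih, ← B.add_assoc]

lemma aux_smul_mul (m n : ℕ) (a : X) :
    B.smul (m * n) a = B.smul m (B.smul n a) := by
  induction m with
  | zero => rw [Nat.zero_mul]; rfl
  | succ m ih =>
    have h : (m + 1) * n = n + m * n := by ring
    rw [h, B.aux_smul_add_nat, ih, B.aux_smul_succ]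

lemma aux_smul_mem {M : Set X} (hM : B.IsSubbinoid M) (n : ℕ) {a : X} (ha : a ∈ M) :
    B.smul n a ∈ M := by
  induction n with
  | zero => exact hM.1
  | succ n ih => exact hM.2.2 a ha _ ih

lemma aux_listSum_cons (a : X) (l : List X) :
    B.listSum (a :: l) = B.add a (B.listSum l) := rfl

lemma aux_listSum_erase [DecidableEq X] {a : X} {l : List X} (h : a ∈ l) :
    B.listSum l = B.add a (B.listSum (l.erase a)) := by
  induction l with
  | nil => cases h
  | cons b l ih =>
    by_cases hab : b = a
    · subst hab; rw [List.erase_cons_head]; rfl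
    · have ha : a ∈ l := by
        rcases List.mem_cons.mp h with rfl | h'
        · exact absurd rfl hab
        · exact h'
      rw [List.erase_cons_tail (by simpa using hab),
        B.aux_listSum_cons, B.aux_listSum_cons, ih ha, ← B.add_assoc,
        B.add_comm b a, B.add_assoc]

lemma aux_extract [DecidableEq X] (k : ℕ) (t : X) :
    ∀ l : List X, k ≤ l.count t →
      ∃ l₂ : List X, (∀ a ∈ l₂, a ∈ l) ∧ l₂.length + k = l.length ∧
        B.listSum l = B.add (B.smul k t) (B.listSum l₂) := by
  induction k with
  | zero =>
    intro l _
    exact ⟨l, fun a ha => ha, rfl, (B.zero_add _).symm⟩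
  | succ k ih =>
    intro l hcount
    have ht : t ∈ l := by
      have h0 : 0 < l.count t := lt_of_lt_of_le (Nat.succ_pos k) hcount
      exact List.count_pos_iff.mp h0
    have hce : k ≤ (l.erase t).count t := by
      rw [List.count_erase_self]; omega
    obtain ⟨l₂, hsub, hlen, hsum⟩ := ih (l.erase t) hce
    refine ⟨l₂, fun a ha => List.mem_of_mem_erase (hsub a ha), ?_, ?_⟩
    · have h1 := List.length_erase_of_mem ht
      have h2 : 1 ≤ l.length := List.length_pos_of_mem ht
      omega
    · rw [B.aux_listSum_erase ht, hsum, B.aux_smul_succ, B.add_assoc]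

lemma aux_length_count [DecidableEq X] (T : Finset X)
    (l : List X) (hT : ∀ a ∈ l, a ∈ T) : l.length = ∑ t ∈ T, l.count t := by
  have h1 : ∑ t ∈ (l : Multiset X).toFinset, l.count t = l.length := by
    simp
  rw [← h1]
  apply Finset.sum_subset
  · intro t ht
    exact hT t (by simpa using ht)
  · intro t _ ht
    simpa using List.count_eq_zero_of_not_mem (by simpa using ht)

def auxP [DecidableEq X] (B : BinoidOn X) (T : Finset X) : ℕ → Finset X
  | 0 => {B.zero}
  | n + 1 => auxP B T n ∪ T.biUnion (fun t => (auxP B T n).image (B.add t))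

lemma aux_memP [DecidableEq X] (T : Finset X) :
    ∀ n (l : List X), (∀ a ∈ l, a ∈ T) → l.length ≤ n →
      B.listSum l ∈ auxP B T n := by
  intro n
  induction n with
  | zero =>
    intro l _ hlen
    have hnil : l = [] := List.length_eq_zero_iff.mp (Nat.le_zero.mp hlen)
    subst hnil
    exact Finset.mem_singleton_self _
  | succ n ih =>
    intro l hT hlen
    cases l with
    | nil =>
      exact Finset.mem_union_left _ (ih [] (by simp) (Nat.zero_le n))
    | cons a l' =>
      have ha : a ∈ T := hT a List.mem_cons_self
      have hsub := ih l' (fun b hb => hT b (List.mem_cons_of_mem a hb))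
        (by simpa using Nat.succ_le_succ_iff.mp (by simpa using hlen))
      refine Finset.mem_union_right _ ?_
      refine Finset.mem_biUnion.mpr ⟨a, ha, ?_⟩
      exact Finset.mem_image.mpr ⟨_, hsub, rfl⟩

lemma aux_reduce [DecidableEq X] {M : Set X} (hM : B.IsSubbinoid M)
    (T : Finset X) (kf : X → ℕ) (hk0 : ∀ x, 0 < kf x) (hkM : ∀ x, B.smul (kf x) x ∈ M) :
    ∀ n (l : List X), l.length ≤ n → (∀ a ∈ l, a ∈ T) →
      ∃ m ∈ M, ∃ l' : List X, (∀ a ∈ l', a ∈ T) ∧ l'.length ≤ ∑ t ∈ T, (kf t - 1) ∧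
        B.listSum l = B.add m (B.listSum l') := by
  intro n
  induction n with
  | zero =>
    intro l hlen hT
    refine ⟨B.zero, hM.1, l, hT, ?_, (B.zero_add _).symm⟩
    omega
  | succ n ih =>
    intro l hlen hT
    by_cases hsmall : l.length ≤ ∑ t ∈ T, (kf t - 1)
    · exact ⟨B.zero, hM.1, l, hT, hsmall, (B.zero_add _).symm⟩
    · push_neg at hsmall
      have hex : ∃ t ∈ T, kf t ≤ l.count t := by
        by_contra hc
        push_neg at hc
        have hle : l.length ≤ ∑ t ∈ T, (kf t - 1) := by
          rw [aux_length_count T l hT]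
          exact Finset.sum_le_sum (fun t htT => by have := hc t htT; omega)
        omega
      obtain ⟨t, htT, hcnt⟩ := hex
      obtain ⟨l₂, hsub, hlen₂, hsum⟩ := B.aux_extract (kf t) t l hcnt
      have hl₂T : ∀ a ∈ l₂, a ∈ T := fun a ha => hT a (hsub a ha)
      have hlt : l₂.length ≤ n := by have := hk0 t; omega
      obtain ⟨m', hm', l', hl'T, hl'len, hsum'⟩ := ih l₂ hlt hl₂T
      refine ⟨B.add (B.smul (kf t) t) m', hM.2.2 _ (hkM t) _ hm', l', hl'T, hl'len, ?_⟩
      rw [hsum, hsum', ← B.add_assoc]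

end BinoidOn

/-- Let `M ⊆ N` be commutative binoids with `N` cancellative.
Then `N` is finite over `M` (finitely generated as an `M`-set) iff `N` is pure
integral over `M` and `N` is a finitely generated `M`-binoid. -/
theorem stmt3 {X : Type} (B : BinoidOn X) (M : Set X) (hM : B.IsSubbinoid M)
    (hcanc : ∀ a b c : X, c ≠ B.infty → B.add a c = B.add b c → a = b) :
    (∃ T : Finset X, ∀ x : X, ∃ m ∈ M, ∃ t ∈ T, x = B.add m t) ↔
      ((∀ x : X, ∃ k : ℕ, 0 < k ∧ B.smul k x ∈ M) ∧
        ∃ T : Finset X, ∀ x : X, ∃ m ∈ M, ∃ l : List X,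
          (∀ a ∈ l, a ∈ T) ∧ x = B.add m (B.listSum l)) := by
  classical
  constructor
  · rintro ⟨T, hT⟩
    constructor
    · -- pure integrality
      intro x
      by_cases hx : x = B.infty
      · exact ⟨1, Nat.one_pos, by rw [hx, B.aux_smul_one]; exact hM.2.1⟩
      · have h0i : B.zero ≠ B.infty := by
          intro h
          apply hx
          rw [← B.zero_add x, h, B.infty_add]
        have hninf : ∀ a b : X, a ≠ B.infty → b ≠ B.infty → B.add a b ≠ B.infty := by
          intro a b ha hb hab
          exact ha (hcanc a B.infty b hb (by rw [hab, B.infty_add]))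
        have hsmulninf : ∀ n (a : X), a ≠ B.infty → B.smul n a ≠ B.infty := by
          intro n a ha
          induction n with
          | zero => exact h0i
          | succ n ih => exact hninf a _ ha ih
        choose mf hmf tf htf heq using hT
        set u : ℕ → X := fun p => Nat.rec x (fun _ v => tf (B.smul 2 v)) p with hu
        have hustep : ∀ p, B.smul 2 (u p) = B.add (mf (B.smul 2 (u p))) (u (p+1)) :=
          fun p => heq (B.smul 2 (u p))
        have hune : ∀ p, u p ≠ B.infty := by
          intro p
          induction p with
          | zero => exact hx
          | succ p ih =>
            intro h
            apply hsmulninf 2 (u p) ih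
            rw [hustep p, h, B.aux_add_infty]
        have huT : ∀ p, u (p+1) ∈ T := fun p => htf _
        have claimB : ∀ q p, ∃ ν ∈ M, B.smul (2^q) (u p) = B.add ν (u (p+q)) := by
          intro q
          induction q with
          | zero =>
            intro p
            refine ⟨B.zero, hM.1, ?_⟩
            rw [pow_zero, B.aux_smul_one]
            exact (B.zero_add _).symm
          | succ q ih =>
            intro p
            obtain ⟨ν, hν, h⟩ := ih p
            refine ⟨B.add (B.smul 2 ν) (mf (B.smul 2 (u (p+q)))), ?_, ?_⟩
            · exact hM.2.2 _ (B.aux_smul_mem hM 2 hν) _ (hmf _)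
            · have h2 : (2:ℕ)^(q+1) = 2 * 2^q := by ring
              calc B.smul (2^(q+1)) (u p) = B.smul 2 (B.smul (2^q) (u p)) := by
                    rw [h2, B.aux_smul_mul]
                _ = B.smul 2 (B.add ν (u (p+q))) := by rw [h]
                _ = B.add (B.smul 2 ν) (B.smul 2 (u (p+q))) := B.aux_smul_add 2 ν _
                _ = B.add (B.smul 2 ν)
                      (B.add (mf (B.smul 2 (u (p+q)))) (u (p+q+1))) :=
                    congrArg _ (hustep (p+q))
                _ = B.add (B.add (B.smul 2 ν) (mf (B.smul 2 (u (p+q)))))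
                      (u (p+(q+1))) := (B.add_assoc _ _ _).symm
        have hcard : T.card < (Finset.range (T.card + 1)).card := by simp
        obtain ⟨a', _, b', _, hab, hfeq⟩ :=
          Finset.exists_ne_map_eq_of_card_lt_of_maps_to hcard
            (fun p (_ : p ∈ Finset.range (T.card+1)) => huT p)
        obtain ⟨a, b, hlt, hueq⟩ : ∃ a b, a < b ∧ u (a+1) = u (b+1) := by
          rcases lt_or_gt_of_ne hab with h | h
          · exact ⟨a', b', h, hfeq⟩
          · exact ⟨b', a', h, hfeq.symm⟩
        set r := b - a with hr
        have hrpos : 0 < r := by omega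
        have h2r : 1 < 2^r := Nat.one_lt_two_pow_iff.mpr (by omega)
        have habr : (a+1) + r = b + 1 := by omega
        obtain ⟨ν, hν, hB⟩ := claimB r (a+1)
        rw [habr, ← hueq] at hB
        have hsplit : B.smul (2^r) (u (a+1)) =
            B.add (B.smul (2^r - 1) (u (a+1))) (u (a+1)) := by
          have he : 2^r = (2^r - 1) + 1 := by omega
          conv_lhs => rw [he]
          rw [B.aux_smul_add_nat, B.aux_smul_one]
        have hcancel : B.smul (2^r - 1) (u (a+1)) = ν := by
          apply hcanc _ _ (u (a+1)) (hune (a+1))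
          rw [← hsplit, hB]
        obtain ⟨μ, hμ, hA⟩ := claimB (a+1) 0
        rw [Nat.zero_add] at hA
        have hA' : B.smul (2^(a+1)) x = B.add μ (u (a+1)) := hA
        refine ⟨(2^r - 1) * 2^(a+1), ?_, ?_⟩
        · exact Nat.mul_pos (by omega) (pow_pos (by norm_num) _)
        · rw [B.aux_smul_mul, hA', B.aux_smul_add, hcancel]
          exact hM.2.2 _ (B.aux_smul_mem hM _ hμ) _ hν
    · -- finitely generated M-binoid
      refine ⟨T, fun x => ?_⟩
      obtain ⟨m, hm, t, ht, hx⟩ := hT x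
      refine ⟨m, hm, [t], ?_, ?_⟩
      · intro a ha
        rw [List.mem_singleton.mp ha]
        exact ht
      · show x = B.add m (B.add t B.zero)
        rw [B.aux_add_zero, hx]
  · rintro ⟨hpi, T, hT⟩
    choose kf hk0 hkM using hpi
    refine ⟨B.auxP T (∑ t ∈ T, (kf t - 1)), fun x => ?_⟩
    obtain ⟨m, hm, l, hlT, hx⟩ := hT x
    obtain ⟨m', hm', l', hl'T, hl'len, hsum⟩ :=
      B.aux_reduce hM T kf hk0 hkM l.length l le_rfl hlT
    refine ⟨B.add m m', hM.2.2 _ hm _ hm', B.listSum l',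
      B.aux_memP T _ l' hl'T hl'len, ?_⟩
    rw [hx, hsum, ← B.add_assoc]
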